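/- Let X be a trace-zero real 2×2 matrix with Q(X) = -N det(X) = m > 0, and z a point in the upper half-plane. Then Q(X_z) = m · cosh²(d(z, c_X)), where X_z is the projection of X onto the positive definite plane X(z)^⊥, and c_X = {z ∈ ℍ : a|z|² + b·Re(z) + c = 0} is the geodesic associated to the binary quadratic form aNx² + bxy + cy² corresponding to X, and d(z, c_X) is the hyperbolic distance from z to this geodesic. -/

import Mathlib

open Matrix

/-- The matrix `X(z) = (1/(√N·y))·(-x, |z|²; -1, x)` for `z = x + iy`. -/
noncomputable def Xmat (N : ℕ) (z : ℂ) : Matrix (Fin 2) (Fin 2) ℝ :=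
  (1 / (Real.sqrt N * z.im)) • !![-z.re, Complex.normSq z; -1, z.re]

/-- Orthogonal projection of `X` onto the line `ℝ·X(z)`, with respect to the
bilinear form `(A,B) = N·tr(AB)`. -/
noncomputable def projNeg (N : ℕ) (z : ℂ) (X : Matrix (Fin 2) (Fin 2) ℝ) :
    Matrix (Fin 2) (Fin 2) ℝ :=
  (((N : ℝ) * (X * Xmat N z).trace) / ((N : ℝ) * (Xmat N z * Xmat N z).trace)) • Xmat N z

/-- Hyperbolic distance on the upper half-plane, characterized by
`cosh d(z,w) = 1 + |z-w|²/(2 Im z Im w)`. -/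
noncomputable def arcosh (t : ℝ) : ℝ := Real.log (t + Real.sqrt (t ^ 2 - 1))

noncomputable def hypDist (z w : ℂ) : ℝ :=
  arcosh (1 + ‖z - w‖ ^ 2 / (2 * z.im * w.im))

set_option maxHeartbeats 1600000

lemma cosh_arcosh' {t : ℝ} (ht : 1 ≤ t) : Real.cosh (arcosh t) = t := by
  have h1 : 0 ≤ t ^ 2 - 1 := by nlinarith
  have hs : Real.sqrt (t ^ 2 - 1) ^ 2 = t ^ 2 - 1 := Real.sq_sqrt h1
  have hpos : 0 < t + Real.sqrt (t ^ 2 - 1) := by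
    have := Real.sqrt_nonneg (t ^ 2 - 1); linarith
  rw [arcosh, Real.cosh_eq, Real.exp_log hpos, Real.exp_neg, Real.exp_log hpos]
  field_simp
  nlinarith [hs]

lemma arcosh_le_arcosh' {s t : ℝ} (hs : 1 ≤ s) (hst : s ≤ t) : arcosh s ≤ arcosh t := by
  have h1 : 0 ≤ s ^ 2 - 1 := by nlinarith
  have hpos : 0 < s + Real.sqrt (s ^ 2 - 1) := by
    have := Real.sqrt_nonneg (s ^ 2 - 1); linarith
  apply Real.log_le_log hpos
  have : Real.sqrt (s ^ 2 - 1) ≤ Real.sqrt (t ^ 2 - 1) := by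
    apply Real.sqrt_le_sqrt; nlinarith
  linarith

/-- Pointwise lower bound: the hyperbolic cosine of the distance from `z = x+iy`
to any point `u+iv` of the geodesic is at least `√(1 + Q(z)²/(D y²))`. -/
lemma geo_lb (A b c x y u v : ℝ) (hy : 0 < y) (hv : 0 < v)
    (hD : 0 < b^2 - 4*A*c) (hw : A*(u^2+v^2) + b*u + c = 0) :
    Real.sqrt (1 + (A*(x^2+y^2)+b*x+c)^2/((b^2-4*A*c)*y^2))
      ≤ 1 + ((x-u)^2+(y-v)^2)/(2*y*v) := by
  have hc : c = -(A*(u^2+v^2)+b*u) := by linarith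
  subst hc
  have hF : (0:ℝ) ≤ 1 + ((x-u)^2+(y-v)^2)/(2*y*v) := by positivity
  have hEEid : (b^2 - 4*A*(-(A*(u^2+v^2)+b*u))) * (((x-u)^2+(y-v)^2) * ((x-u)^2+(y+v)^2))
      - 4*v^2*(A*(x^2+y^2)+b*x+-(A*(u^2+v^2)+b*u))^2
      = ((b+2*A*u)*((x-u)^2+y^2-v^2) - 4*A*v^2*(x-u))^2 := by ring
  have hEE : 4*v^2*(A*(x^2+y^2)+b*x+-(A*(u^2+v^2)+b*u))^2
      ≤ (b^2 - 4*A*(-(A*(u^2+v^2)+b*u))) * (((x-u)^2+(y-v)^2) * ((x-u)^2+(y+v)^2)) := by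
    nlinarith [hEEid, sq_nonneg ((b+2*A*u)*((x-u)^2+y^2-v^2) - 4*A*v^2*(x-u))]
  have hsq : 1 + (A*(x^2+y^2)+b*x+-(A*(u^2+v^2)+b*u))^2/((b^2 - 4*A*(-(A*(u^2+v^2)+b*u)))*y^2)
      ≤ (1 + ((x-u)^2+(y-v)^2)/(2*y*v))^2 := by
    have h2 : (1 + ((x-u)^2+(y-v)^2)/(2*y*v))^2
        = 1 + ((x-u)^2+(y-v)^2)*((x-u)^2+(y+v)^2)/(4*y^2*v^2) := by
      field_simp
      ring
    rw [h2]
    have hd1 : (0:ℝ) < (b^2 - 4*A*(-(A*(u^2+v^2)+b*u)))*y^2 := by positivity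
    have hd2 : (0:ℝ) < 4*y^2*v^2 := by positivity
    have h3 : (A*(x^2+y^2)+b*x+-(A*(u^2+v^2)+b*u))^2 * (4*y^2*v^2)
        ≤ ((x-u)^2+(y-v)^2)*((x-u)^2+(y+v)^2) * ((b^2 - 4*A*(-(A*(u^2+v^2)+b*u)))*y^2) := by
      nlinarith [hEE, sq_nonneg y]
    have := (div_le_div_iff₀ hd1 hd2).2 h3
    linarith
  calc Real.sqrt (1 + (A*(x^2+y^2)+b*x+-(A*(u^2+v^2)+b*u))^2/((b^2-4*A*(-(A*(u^2+v^2)+b*u)))*y^2))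
      ≤ Real.sqrt ((1 + ((x-u)^2+(y-v)^2)/(2*y*v))^2) := Real.sqrt_le_sqrt hsq
    _ = 1 + ((x-u)^2+(y-v)^2)/(2*y*v) := Real.sqrt_sq hF

/-- The infimum is attained: a point of the geodesic realizing
`cosh d = √(1 + Q(z)²/(D y²))`. -/
lemma geo_witness (A b c x y : ℝ) (hy : 0 < y) (hD : 0 < b^2 - 4*A*c) :
    ∃ u v : ℝ, 0 < v ∧ A*(u^2+v^2) + b*u + c = 0 ∧
      1 + ((x-u)^2+(y-v)^2)/(2*y*v)
        = Real.sqrt (1 + (A*(x^2+y^2)+b*x+c)^2/((b^2-4*A*c)*y^2)) := by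
  rcases eq_or_ne A 0 with hA | hA
  · -- vertical line case
    subst hA
    have hb : b ≠ 0 := by intro h; rw [h] at hD; nlinarith
    set u := -c/b with hu
    set v := Real.sqrt ((x-u)^2 + y^2) with hv
    have hv2 : v^2 = (x-u)^2 + y^2 := Real.sq_sqrt (by positivity)
    have hvpos : 0 < v := Real.sqrt_pos.2 (by positivity)
    have hbu : b*u + c = 0 := by rw [hu]; field_simp; ring
    refine ⟨u, v, hvpos, by linear_combination hbu, ?_⟩
    have hQ : 0*(x^2+y^2)+b*x+c = b*(x-u) := by linear_combination hbu
    have harg : 1 + (b*(x-u))^2/((b^2-4*0*c)*y^2) = (v/y)^2 := by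
      have h1 : (v/y)^2 = ((x-u)^2 + y^2)/y^2 := by rw [div_pow, hv2]
      rw [h1]; field_simp; ring
    rw [hQ, harg, Real.sqrt_sq (by positivity)]
    have hvy : 1 + ((x-u)^2+(y-v)^2)/(2*y*v)
        = (2*y*v + ((x-u)^2+(y-v)^2))/(2*y*v) := by field_simp
    rw [hvy, div_eq_div_iff (by positivity) hy.ne']
    linear_combination (-y)*hv2
  · -- semicircle case
    set x₀ := -b/(2*A) with hx0
    set r := Real.sqrt ((b^2-4*A*c)/(4*A^2)) with hr
    have hr2 : r^2 = (b^2-4*A*c)/(4*A^2) := Real.sq_sqrt (by positivity)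
    have hrpos : 0 < r := Real.sqrt_pos.2 (by positivity)
    set p := x - x₀ with hp
    have hKpos : (0:ℝ) < p^2+y^2+r^2 := by positivity
    set S := Real.sqrt ((p^2+y^2+r^2)^2 - 4*r^2*p^2) with hSdef
    have hS2pos : 0 < (p^2+y^2+r^2)^2 - 4*r^2*p^2 := by
      have h : (p^2+y^2+r^2)^2 - 4*r^2*p^2 = (p^2+y^2-r^2)^2 + 4*r^2*y^2 := by ring
      rw [h]; positivity
    have hS2 : S^2 = (p^2+y^2+r^2)^2 - 4*r^2*p^2 := Real.sq_sqrt hS2pos.le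
    have hSpos : 0 < S := Real.sqrt_pos.2 hS2pos
    set u := x₀ + 2*r^2*p/(p^2+y^2+r^2) with hu
    set v := r*S/(p^2+y^2+r^2) with hv
    have hvpos : 0 < v := by rw [hv]; positivity
    have hKu : (p^2+y^2+r^2)*(u - x₀) = 2*r^2*p := by rw [hu]; field_simp; ring
    have hKv : (p^2+y^2+r^2)*v = r*S := by rw [hv]; field_simp
    have hD4 : b^2 - 4*A*c = 4*A^2*r^2 := by rw [hr2]; field_simp
    have h2Ax0 : 2*A*x₀ + b = 0 := by rw [hx0]; field_simp; ring
    have hAr2 : A*x₀^2 + b*x₀ + c + A*r^2 = 0 := by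
      rw [hx0, hr2]; field_simp; ring
    have hcirc : (u-x₀)^2 + v^2 = r^2 := by
      have hK2 : ((p^2+y^2+r^2))^2*((u-x₀)^2+v^2) = ((p^2+y^2+r^2))^2*r^2 := by
        linear_combination ((p^2+y^2+r^2)*(u-x₀)+2*r^2*p)*hKu
          + ((p^2+y^2+r^2)*v+r*S)*hKv + r^2*hS2
      exact mul_left_cancel₀ (pow_ne_zero 2 hKpos.ne') hK2
    refine ⟨u, v, hvpos, ?_, ?_⟩
    · linear_combination A*hcirc + (u-x₀)*h2Ax0 + hAr2
    · have hQ : A*(x^2+y^2)+b*x+c = A*((p^2+y^2) - r^2) := by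
        linear_combination (-A*(p + x - x₀))*hp + (x - x₀)*h2Ax0 + hAr2
      have hKxu : (p^2+y^2+r^2)*(x-u) = p*(p^2+y^2-r^2) := by
        linear_combination (-1)*hKu + (-(p^2+y^2+r^2))*hp
      have hcross : ((x-u)^2 + y^2 + v^2)*r = v*S := by
        have hK2 : ((p^2+y^2+r^2))^2*(((x-u)^2+y^2+v^2)*r)
            = ((p^2+y^2+r^2))^2*(v*S) := by
          linear_combination (r*((p^2+y^2+r^2)*(x-u) + p*(p^2+y^2-r^2)))*hKxu
            + (r*(p^2+y^2+r^2)*v - S*(p^2+y^2))*hKv + (-(r*(p^2+y^2)))*hS2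
        exact mul_left_cancel₀ (pow_ne_zero 2 hKpos.ne') hK2
      have harg : 1 + (A*((p^2+y^2) - r^2))^2/((4*A^2*r^2)*y^2) = (S/(2*r*y))^2 := by
        rw [div_pow, hS2]; field_simp; ring
      rw [hQ, hD4, harg, Real.sqrt_sq (by positivity)]
      have hvy : 1 + ((x-u)^2+(y-v)^2)/(2*y*v)
          = (2*y*v + ((x-u)^2+(y-v)^2))/(2*y*v) := by field_simp
      rw [hvy, div_eq_div_iff (by positivity) (by positivity)]
      linear_combination (2*y)*hcross

/-- The value `Q(X_z)` computed explicitly. -/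
lemma matLHS (N : ℕ) (hN : 0 < N) (a b c : ℝ) (m : ℝ)
    (X : Matrix (Fin 2) (Fin 2) ℝ)
    (hX : X = !![b / (2 * N), c / N; -a, -b / (2 * N)])
    (hm : m = -(N : ℝ) * X.det)
    (z : ℂ) (hz : 0 < z.im) :
    -(N : ℝ) * (X - projNeg N z X).det =
      m + (a*N*(z.re^2+z.im^2) + b*z.re + c)^2 / (4*N*z.im^2) := by
  have hNR : (0:ℝ) < N := by exact_mod_cast hN
  have hsNpos : 0 < Real.sqrt N := Real.sqrt_pos.2 hNR
  have hN2 : (N:ℝ) = Real.sqrt N ^ 2 := (Real.sq_sqrt hNR.le).symm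
  have hy := hz.ne'
  subst hX hm
  simp only [projNeg, Xmat, Complex.normSq_apply, Matrix.trace_fin_two,
    Matrix.mul_apply, Fin.sum_univ_two, Matrix.smul_apply, Matrix.sub_apply,
    Matrix.det_fin_two, Matrix.cons_val', Matrix.cons_val_zero, Matrix.cons_val_one,
    Matrix.head_cons, Matrix.head_fin_const, Matrix.cons_val_fin_one, smul_eq_mul,
    Matrix.empty_val', Matrix.of_apply]
  rw [hN2]
  set s := Real.sqrt N with hs
  field_simp
  ring_nf

/-- For `X = (b/2N, c/N; -a, -b/2N)` with `Q(X) = m > 0` and `z` in the upper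
half-plane: `Q(X_z) = m·cosh²(d(z, c_X))`, where `c_X` is the geodesic
associated to the binary quadratic form `aN x² + bxy + cy²` (the locus
`aN|w|² + b·Re w + c = 0` in the upper half-plane) and `d(z, c_X)` is the
infimum of the hyperbolic distances from `z` to points of `c_X`. -/
theorem stmt_18 (N : ℕ) (hN : 0 < N) (a b c : ℝ) (m : ℝ)
    (X : Matrix (Fin 2) (Fin 2) ℝ)
    (hX : X = !![b / (2 * N), c / N; -a, -b / (2 * N)])
    (hm : m = -(N : ℝ) * X.det) (hmpos : 0 < m)
    (z : ℂ) (hz : 0 < z.im) :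
    -(N : ℝ) * (X - projNeg N z X).det =
      m * Real.cosh (sInf (hypDist z ''
        {w : ℂ | 0 < w.im ∧ a * N * Complex.normSq w + b * w.re + c = 0})) ^ 2 := by
  have hNR : (0:ℝ) < N := by exact_mod_cast hN
  have hy : 0 < z.im := hz
  -- discriminant
  have hdet : X.det = b/(2*N)*(-(b/(2*N))) - c/N*(-a) := by
    rw [hX]; simp [Matrix.det_fin_two_of]; ring
  have hD4N : b^2 - 4*(a*(N:ℝ))*c = 4*N*m := by
    rw [hm, hdet]; field_simp; ring
  have hD : 0 < b^2 - 4*(a*(N:ℝ))*c := by rw [hD4N]; positivity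
  set Q : ℝ := a*(N:ℝ)*(z.re^2+z.im^2) + b*z.re + c with hQdef
  set C : ℝ := Real.sqrt (1 + Q^2/((b^2-4*(a*(N:ℝ))*c)*z.im^2)) with hCdef
  have hargnn : (0:ℝ) ≤ 1 + Q^2/((b^2-4*(a*(N:ℝ))*c)*z.im^2) := by positivity
  have hC1 : 1 ≤ C := by
    rw [hCdef]
    rw [show (1:ℝ) = Real.sqrt 1 from Real.sqrt_one.symm]
    apply Real.sqrt_le_sqrt
    have : 0 ≤ Q^2/((b^2-4*(a*(N:ℝ))*c)*z.im^2) := by positivity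
    simp only [Real.sqrt_one]
    linarith
  have habs : ∀ w : ℂ, ‖z - w‖ ^ 2 = (z.re - w.re)^2 + (z.im - w.im)^2 := by
    intro w
    rw [Complex.sq_norm, Complex.normSq_apply, Complex.sub_re, Complex.sub_im]
    ring
  have hLeast : IsLeast (hypDist z ''
      {w : ℂ | 0 < w.im ∧ a * N * Complex.normSq w + b * w.re + c = 0}) (arcosh C) := by
    constructor
    · obtain ⟨u, v, hvpos, hmem, hval⟩ := geo_witness (a*(N:ℝ)) b c z.re z.im hy hD
      refine ⟨⟨u, v⟩, ⟨hvpos, ?_⟩, ?_⟩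
      · show a * N * Complex.normSq ⟨u, v⟩ + b * (⟨u,v⟩ : ℂ).re + c = 0
        rw [Complex.normSq_mk]
        linear_combination hmem
      · show hypDist z ⟨u, v⟩ = arcosh C
        rw [hypDist]
        congr 1
        rw [habs ⟨u, v⟩]
        show 1 + ((z.re - u)^2 + (z.im - v)^2) / (2 * z.im * v) = C
        rw [hCdef, hQdef]
        convert hval using 3 <;> ring
    · rintro d ⟨w, ⟨hw1, hw2⟩, rfl⟩
      rw [hypDist]
      apply arcosh_le_arcosh' hC1
      rw [habs w]
      have hw2' : a*(N:ℝ)*(w.re^2+w.im^2) + b*w.re + c = 0 := by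
        rw [Complex.normSq_apply] at hw2
        linear_combination hw2
      have := geo_lb (a*(N:ℝ)) b c z.re z.im w.re w.im hy hw1 hD hw2'
      rw [hCdef, hQdef]
      convert this using 3 <;> ring
  rw [hLeast.csInf_eq, cosh_arcosh' hC1]
  have hCsq : C^2 = 1 + Q^2/((b^2-4*(a*(N:ℝ))*c)*z.im^2) := Real.sq_sqrt hargnn
  rw [hCsq]
  have hrhs : m * (1 + Q^2/((b^2-4*(a*(N:ℝ))*c)*z.im^2))
      = m + Q^2/(4*N*z.im^2) := by
    rw [hD4N]
    field_simp
  rw [hrhs, hQdef]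
  exact matLHS N hN a b c m X hX hm z hz
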